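/- Let G be a star graph with n vertices (one central vertex adjacent to the other n−1), and let T be a complete d-regular tree of height h = ⌈log_d n⌉ with 2 ≤ d ≤ n. The minimum over injective arrangements φ of the vertices of G into leaves of T of Σ_{edges (u,v)} d_T(φ(u),φ(v)) equals 2·(h·n − (d^h − 1)/(d − 1)). -/

import Mathlib

/-- The complete `d`-regular tree of height `h`: vertices are pairs of a level
`k ∈ {0,…,h}` and an index in `Fin (d^k)`; the parent of vertex `m` at level `k+1`
is vertex `m / d` at level `k`.  Leaves are the vertices at level `h`, and the
canonical order of leaves is the order of their indices. -/
def dAryTree (d h : ℕ) : SimpleGraph ((k : Fin (h + 1)) × Fin (d ^ (k : ℕ))) where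
  Adj x y := (x.1.val + 1 = y.1.val ∧ x.2.val = y.2.val / d) ∨
             (y.1.val + 1 = x.1.val ∧ y.2.val = x.2.val / d)
  symm := ⟨fun _ _ hxy => hxy.symm⟩
  loopless := ⟨by rintro x (⟨h1, _⟩ | ⟨h1, _⟩) <;> omega⟩

/-- The `i`-th leaf (in canonical order) of the complete `d`-regular tree of height `h`. -/
def leafVert (d h : ℕ) (i : Fin (d ^ h)) : (k : Fin (h + 1)) × Fin (d ^ (k : ℕ)) :=
  ⟨⟨h, Nat.lt_succ_self h⟩, i⟩

/-- The distance in the complete `d`-regular tree of height `h` between its `i`-th and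
`j`-th leaves (in canonical order). -/
noncomputable def leafDist (d h : ℕ) (i j : Fin (d ^ h)) : ℕ :=
  (dAryTree d h).dist (leafVert d h i) (leafVert d h j)

/-- Given an arrangement `φ` of vertices on leaves, the leaf distance associated to an
unordered pair of vertices. -/
noncomputable def edgeDist {V : Type*} (d h : ℕ) (φ : V → Fin (d ^ h)) : Sym2 V → ℕ :=
  Sym2.lift ⟨fun u v => leafDist d h (φ u) (φ v), fun _ _ => SimpleGraph.dist_comm⟩

/-- The objective value of an arrangement `φ` of the star graph on `Fin n` (with central
vertex `0` adjacent to all other vertices) on the leaves of the complete `d`-regular tree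
of height `h`: the sum of leaf distances over all edges of the star. -/
noncomputable def starCost (d h n : ℕ) (φ : Fin n → Fin (d ^ h)) : ℕ :=
  ∑ v : Fin n, if v.val = 0 then 0 else leafDist d h (φ ⟨0, v.pos⟩) (φ v)

namespace StarOpt

open SimpleGraph Finset

/-- The vertex of the tree at level `k` with index `m`. -/
def tv (d h k : ℕ) (hk : k ≤ h) (m : ℕ) (hm : m < d ^ k) :
    (k' : Fin (h + 1)) × Fin (d ^ (k' : ℕ)) :=
  ⟨⟨k, Nat.lt_succ_of_le hk⟩, ⟨m, hm⟩⟩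

/-- A walk of length `e` from a vertex up to its ancestor `e` levels above. -/
lemma walk_up {d h : ℕ} (hd : 0 < d) (e : ℕ) :
    ∀ (l k : ℕ) (hkl : k + e = l) (hl : l ≤ h) (m : ℕ) (hm : m < d ^ l)
    (m' : ℕ) (hm' : m' < d ^ k), m' = m / d ^ e →
    ∃ p : (dAryTree d h).Walk (tv d h l hl m hm) (tv d h k (by omega) m' hm'),
      p.length = e := by
  induction e with
  | zero =>
    intro l k hkl hl m hm m' hm' hmm
    subst hkl
    simp only [pow_zero, Nat.div_one] at hmm
    subst hmm
    exact ⟨Walk.nil, rfl⟩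
  | succ e ih =>
    intro l k hkl hl m hm m' hm' hmm
    subst hkl
    have hl1 : k + e ≤ h := by omega
    have hmd : m / d < d ^ (k + e) := by
      rw [Nat.div_lt_iff_lt_mul hd, ← pow_succ]
      exact hm
    have hadj : (dAryTree d h).Adj (tv d h (k + e + 1) hl m hm) (tv d h (k + e) hl1 (m / d) hmd) :=
      show _ ∨ _ from Or.inr ⟨rfl, rfl⟩
    have hmm' : m' = (m / d) / d ^ e := by
      rw [Nat.div_div_eq_div_mul, ← pow_succ']
      exact hmm
    obtain ⟨p, hp⟩ := ih (k + e) k rfl hl1 (m / d) hmd m' hm' hmm'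
    exact ⟨Walk.cons hadj p, by simp [hp]⟩

/-- Along any walk, levels change by one per step. -/
lemma level_le {d h : ℕ} {x y : (k : Fin (h + 1)) × Fin (d ^ (k : ℕ))}
    (p : (dAryTree d h).Walk x y) : (x.1 : ℕ) ≤ (y.1 : ℕ) + p.length := by
  induction p with
  | nil => simp
  | cons hadj p ih =>
    rename_i u v w
    simp only [Walk.length_cons]; rcases (hadj : _ ∨ _) with ⟨h1, _⟩ | ⟨h1, _⟩ <;> omega

/-- If a walk stays at levels `≥ k`, the level-`k` ancestor is constant along it. -/
lemma proj_const {d h : ℕ} {x y : (k : Fin (h + 1)) × Fin (d ^ (k : ℕ))}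
    (p : (dAryTree d h).Walk x y) (k : ℕ) (hk : ∀ v ∈ p.support, k ≤ (v.1 : ℕ)) :
    (x.2 : ℕ) / d ^ ((x.1 : ℕ) - k) = (y.2 : ℕ) / d ^ ((y.1 : ℕ) - k) := by
  induction p with
  | nil => rfl
  | cons hadj p ih =>
    rename_i u v w
    have hku : k ≤ (u.1 : ℕ) := hk u (by simp)
    have hkv : k ≤ (v.1 : ℕ) := hk v (by simp [Walk.support_cons, Walk.start_mem_support])
    have hrest : ∀ z ∈ p.support, k ≤ (z.1 : ℕ) := fun z hz => hk z (by simp [hz])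
    have key : (u.2 : ℕ) / d ^ ((u.1 : ℕ) - k) = (v.2 : ℕ) / d ^ ((v.1 : ℕ) - k) := by
      rcases (hadj : _ ∨ _) with ⟨h1, h2⟩ | ⟨h1, h2⟩
      · have hv1 : ((v.1 : ℕ) - k) = ((u.1 : ℕ) - k) + 1 := by omega
        rw [h2, Nat.div_div_eq_div_mul, hv1, pow_succ']
      · have hu1 : ((u.1 : ℕ) - k) = ((v.1 : ℕ) - k) + 1 := by omega
        rw [h2, Nat.div_div_eq_div_mul, hu1, pow_succ']
    exact key.trans (ih hrest)

lemma exists_prefEq {d h : ℕ} (i j : Fin (d ^ h)) :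
    ∃ e, (i : ℕ) / d ^ e = (j : ℕ) / d ^ e :=
  ⟨h, by rw [Nat.div_eq_of_lt i.2, Nat.div_eq_of_lt j.2]⟩

/-- The depth of the two leaves below their lowest common ancestor. -/
def minE {d h : ℕ} (i j : Fin (d ^ h)) : ℕ := Nat.find (exists_prefEq i j)

lemma minE_spec {d h : ℕ} (i j : Fin (d ^ h)) :
    (i : ℕ) / d ^ (minE i j) = (j : ℕ) / d ^ (minE i j) := Nat.find_spec (exists_prefEq i j)

lemma minE_le_h {d h : ℕ} (i j : Fin (d ^ h)) : minE i j ≤ h :=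
  Nat.find_le (by rw [Nat.div_eq_of_lt i.2, Nat.div_eq_of_lt j.2])

lemma minE_le_iff {d h : ℕ} (i j : Fin (d ^ h)) (t : ℕ) :
    minE i j ≤ t ↔ (i : ℕ) / d ^ t = (j : ℕ) / d ^ t := by
  constructor
  · intro hle
    have hs := minE_spec i j
    have hdt : d ^ t = d ^ (minE i j) * d ^ (t - minE i j) := by
      rw [← pow_add]; congr 1; omega
    rw [hdt, ← Nat.div_div_eq_div_mul, ← Nat.div_div_eq_div_mul, hs]
  · exact fun hp => Nat.find_le hp

/-- The key distance formula: the distance between two leaves is twice their depth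
below their lowest common ancestor. -/
lemma leafDist_eq {d h : ℕ} (hd : 0 < d) (i j : Fin (d ^ h)) :
    leafDist d h i j = 2 * minE i j := by
  set e := minE i j with he_def
  have he : (i : ℕ) / d ^ e = (j : ℕ) / d ^ e := minE_spec i j
  have heh : e ≤ h := minE_le_h i j
  have hanc : (i : ℕ) / d ^ e < d ^ (h - e) := by
    rw [Nat.div_lt_iff_lt_mul (pow_pos hd e), ← pow_add]
    have : h - e + e = h := by omega
    rw [this]; exact i.2
  obtain ⟨p, hp⟩ := walk_up (h := h) hd e h (h - e) (by omega) le_rfl (i : ℕ) i.2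
      ((i : ℕ) / d ^ e) hanc rfl
  obtain ⟨q, hq⟩ := walk_up (h := h) hd e h (h - e) (by omega) le_rfl (j : ℕ) j.2
      ((i : ℕ) / d ^ e) hanc he
  have hvi : leafVert d h i = tv d h h le_rfl (i : ℕ) i.2 := rfl
  have hvj : leafVert d h j = tv d h h le_rfl (j : ℕ) j.2 := rfl
  have hw : ∃ w : (dAryTree d h).Walk (leafVert d h i) (leafVert d h j), w.length = 2 * e := by
    rw [hvi, hvj]
    exact ⟨p.append q.reverse, by rw [Walk.length_append, Walk.length_reverse, hp, hq]; omega⟩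
  obtain ⟨w0, hw0⟩ := hw
  have hub : leafDist d h i j ≤ 2 * e := hw0 ▸ SimpleGraph.dist_le w0
  rcases Nat.eq_zero_or_pos e with he0 | he1
  · have : (i : ℕ) = (j : ℕ) := by simpa [he0] using he
    have hij : i = j := Fin.ext this
    rw [hij, he0]
    simp [leafDist]
  · have hreach : (dAryTree d h).Reachable (leafVert d h i) (leafVert d h j) := ⟨w0⟩
    obtain ⟨w, hwlen⟩ := hreach.exists_walk_length_eq_dist
    have hlow : 2 * e ≤ w.length := by
      have hvex : ∃ v ∈ w.support, (v.1 : ℕ) + e ≤ h := by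
        by_contra hcon
        push_neg at hcon
        have hall : ∀ v ∈ w.support, h - e + 1 ≤ (v.1 : ℕ) := by
          intro v hv; have := hcon v hv; omega
        have := proj_const w (h - e + 1) hall
        simp only [leafVert] at this
        have hhe : h - (h - e + 1) = e - 1 := by omega
        rw [hhe] at this
        have : e ≤ e - 1 := Nat.find_le this
        omega
      obtain ⟨v, hv, hvh⟩ := hvex
      have hsplit := congrArg Walk.length (w.take_spec hv)
      rw [Walk.length_append] at hsplit
      have h1 : (leafVert d h i).1.val ≤ (v.1 : ℕ) + (w.takeUntil v hv).length :=
        level_le _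
      have h2 : (leafVert d h j).1.val ≤ (v.1 : ℕ) + (w.dropUntil v hv).length := by
        have := level_le (w.dropUntil v hv).reverse
        simpa [Walk.length_reverse] using this
      change h ≤ _ at h1 h2
      omega
    rw [hwlen] at hlow
    exact le_antisymm hub (by exact_mod_cast hlow)

lemma card_fin_ge (n a : ℕ) :
    ((univ : Finset (Fin n)).filter fun v => a ≤ v.val).card = n - a := by
  have h1 : ((univ : Finset (Fin n)).filter fun v => a ≤ v.val).image Fin.val
      = Finset.Ico a n := by
    ext m
    simp only [Finset.mem_image, Finset.mem_filter, Finset.mem_univ, true_and, Finset.mem_Ico]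
    constructor
    · rintro ⟨v, hv, rfl⟩; exact ⟨hv, v.2⟩
    · rintro ⟨h1, h2⟩; exact ⟨⟨m, h2⟩, h1, rfl⟩
  rw [← Nat.card_Ico a n, ← h1, Finset.card_image_of_injective _ Fin.val_injective]

lemma starCost_eq {d h n : ℕ} (hd : 0 < d) (hn0 : 0 < n) (φ : Fin n → Fin (d ^ h)) :
    starCost d h n φ
      = 2 * ∑ v ∈ (univ.filter fun v : Fin n => ¬ v.val = 0), minE (φ ⟨0, hn0⟩) (φ v) := by
  rw [Finset.mul_sum, Finset.sum_filter, starCost]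
  apply Finset.sum_congr rfl
  intro v _
  by_cases hv : v.val = 0
  · simp [hv]
  · simp only [hv, if_false, if_true, not_false_iff]
    rw [leafDist_eq hd]

lemma sum_minE_eq {d h n : ℕ} (hn0 : 0 < n) (φ : Fin n → Fin (d ^ h)) :
    ∑ v ∈ (univ.filter fun v : Fin n => ¬ v.val = 0), minE (φ ⟨0, hn0⟩) (φ v)
      = ∑ t ∈ Finset.range h,
          ((univ.filter fun v : Fin n => ¬ v.val = 0).filter
            fun v => t < minE (φ ⟨0, hn0⟩) (φ v)).card := by
  have step1 : ∀ v : Fin n, minE (φ ⟨0, hn0⟩) (φ v)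
      = ∑ t ∈ Finset.range h, (if t < minE (φ ⟨0, hn0⟩) (φ v) then 1 else 0) := by
    intro v
    rw [Finset.sum_ite, Finset.sum_const, Finset.sum_const, smul_eq_mul, mul_one,
      smul_eq_mul, mul_zero, add_zero]
    have : (Finset.range h).filter (fun t => t < minE (φ ⟨0, hn0⟩) (φ v))
        = Finset.range (minE (φ ⟨0, hn0⟩) (φ v)) := by
      ext t
      simp only [Finset.mem_filter, Finset.mem_range]
      have := minE_le_h (φ ⟨0, hn0⟩) (φ v)
      omega
    rw [this, Finset.card_range]
  calc ∑ v ∈ (univ.filter fun v : Fin n => ¬ v.val = 0), minE (φ ⟨0, hn0⟩) (φ v)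
      = ∑ v ∈ (univ.filter fun v : Fin n => ¬ v.val = 0),
          ∑ t ∈ Finset.range h, (if t < minE (φ ⟨0, hn0⟩) (φ v) then 1 else 0) :=
        Finset.sum_congr rfl fun v _ => step1 v
    _ = ∑ t ∈ Finset.range h, ∑ v ∈ (univ.filter fun v : Fin n => ¬ v.val = 0),
          (if t < minE (φ ⟨0, hn0⟩) (φ v) then 1 else 0) := Finset.sum_comm
    _ = _ := by
        apply Finset.sum_congr rfl
        intro t _
        rw [Finset.sum_ite, Finset.sum_const, Finset.sum_const, smul_eq_mul, mul_one,
          smul_eq_mul, mul_zero, add_zero]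

lemma card_close_le {d h n : ℕ} (hd : 0 < d) (hn0 : 0 < n) (φ : Fin n → Fin (d ^ h))
    (hφ : Function.Injective φ) (t : ℕ) :
    ((univ.filter fun v : Fin n => ¬ v.val = 0).filter
      fun v => minE (φ ⟨0, hn0⟩) (φ v) ≤ t).card ≤ d ^ t - 1 := by
  have hdt : 0 < d ^ t := pow_pos hd t
  have hsub : ((univ.filter fun v : Fin n => ¬ v.val = 0).filter
      fun v => minE (φ ⟨0, hn0⟩) (φ v) ≤ t).card
      ≤ ((Finset.range (d ^ t)).erase ((φ ⟨0, hn0⟩ : ℕ) % d ^ t)).card := by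
    apply Finset.card_le_card_of_injOn (fun v => (φ v : ℕ) % d ^ t)
    · intro v hv
      simp only [Finset.mem_coe, Finset.mem_filter, Finset.mem_univ, true_and] at hv
      obtain ⟨hv0, hvt⟩ := hv
      rw [minE_le_iff] at hvt
      refine Finset.mem_erase.mpr ⟨?_, Finset.mem_range.mpr (Nat.mod_lt _ hdt)⟩
      intro hmod
      have h1 := Nat.div_add_mod (φ v : ℕ) (d ^ t)
      have h2 := Nat.div_add_mod (φ ⟨0, hn0⟩ : ℕ) (d ^ t)
      rw [hvt] at h2
      have hmod' : (φ v : ℕ) % d ^ t = (φ ⟨0, hn0⟩ : ℕ) % d ^ t := hmod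
      have hvals : (φ v : ℕ) = (φ ⟨0, hn0⟩ : ℕ) := by omega
      have := hφ (Fin.ext hvals)
      apply hv0
      rw [this]
    · intro v hv w hw heq
      simp only [Finset.coe_filter, Set.mem_setOf_eq, Finset.mem_univ, true_and] at hv hw
      obtain ⟨hv0, hvt⟩ := hv
      obtain ⟨hw0, hwt⟩ := hw
      rw [minE_le_iff] at hvt hwt
      have hdiv : (φ v : ℕ) / d ^ t = (φ w : ℕ) / d ^ t := hvt.symm.trans hwt
      have heq' : (φ v : ℕ) % d ^ t = (φ w : ℕ) % d ^ t := heq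
      have h1 := Nat.div_add_mod (φ v : ℕ) (d ^ t)
      have h2 := Nat.div_add_mod (φ w : ℕ) (d ^ t)
      rw [← hdiv] at h2
      have hvals : (φ v : ℕ) = (φ w : ℕ) := by omega
      exact hφ (Fin.ext hvals)
  rw [Finset.card_erase_of_mem (Finset.mem_range.mpr (Nat.mod_lt _ hdt)),
    Finset.card_range] at hsub
  exact hsub

end StarOpt

open StarOpt Finset in
/-- For a star graph with `n` vertices and a complete `d`-regular host tree of height
`h = ⌈log_d n⌉` (`2 ≤ d ≤ n`), the minimum over injective arrangements of the total
leaf-distance is exactly `2·(h·n − (d^h − 1)/(d − 1))`. -/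
theorem star_optimal_value (n d : ℕ) (hd : 2 ≤ d) (hdn : d ≤ n) :
    IsLeast {c : ℚ | ∃ φ : Fin n → Fin (d ^ Nat.clog d n), Function.Injective φ ∧
        c = (starCost d (Nat.clog d n) n φ : ℚ)}
      (2 * ((Nat.clog d n : ℚ) * n - ((d : ℚ) ^ Nat.clog d n - 1) / ((d : ℚ) - 1))) := by
  have hd1 : 1 < d := hd
  have hd0 : 0 < d := by omega
  have hn2 : 2 ≤ n := le_trans hd hdn
  have hn0 : 0 < n := by omega
  set h := Nat.clog d n with hh_def
  have hh0 : 0 < h := Nat.clog_pos hd1 hn2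
  have hnh : n ≤ d ^ h := Nat.le_pow_clog hd1 n
  have hpow : ∀ t, t < h → d ^ t < n := by
    intro t ht
    calc d ^ t ≤ d ^ (h - 1) := Nat.pow_le_pow_right (by omega) (by omega)
    _ < n := Nat.pow_pred_clog_lt_self hd1 (by omega)
  set N : ℕ := 2 * ∑ t ∈ Finset.range h, (n - d ^ t) with hN_def
  have hd1q : (d : ℚ) ≠ 1 := by
    intro hq
    have : d = 1 := by exact_mod_cast hq
    omega
  -- the target value equals N
  have hNq : (N : ℚ) = 2 * ∑ t ∈ Finset.range h, ((n : ℚ) - (d : ℚ) ^ t) := by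
    rw [hN_def]
    push_cast
    congr 1
    refine Finset.sum_congr rfl fun t ht => ?_
    rw [Nat.cast_sub (le_of_lt (hpow t (Finset.mem_range.mp ht)))]
    push_cast
    ring
  have hvalue : 2 * ((h : ℚ) * n - ((d : ℚ) ^ h - 1) / ((d : ℚ) - 1)) = (N : ℚ) := by
    rw [hNq, ← geom_sum_eq hd1q h, Finset.sum_sub_distrib, Finset.sum_const,
      Finset.card_range, nsmul_eq_mul]
  -- cardinality of the off-center vertex set
  have hscard : ((univ : Finset (Fin n)).filter fun v : Fin n => ¬ v.val = 0).card = n - 1 := by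
    have : ((univ : Finset (Fin n)).filter fun v : Fin n => ¬ v.val = 0)
        = univ.erase ⟨0, hn0⟩ := by
      ext v
      simp [Finset.mem_erase, Fin.ext_iff]
    rw [this, Finset.card_erase_of_mem (Finset.mem_univ _), Finset.card_univ, Fintype.card_fin]
  -- lower bound for all injective φ
  have hlower : ∀ φ : Fin n → Fin (d ^ h), Function.Injective φ → N ≤ starCost d h n φ := by
    intro φ hφ
    rw [starCost_eq hd0 hn0 φ, sum_minE_eq hn0 φ, hN_def]
    have hterm : ∀ t ∈ Finset.range h, n - d ^ t ≤
        ((univ.filter fun v : Fin n => ¬ v.val = 0).filter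
          fun v => t < minE (φ ⟨0, hn0⟩) (φ v)).card := by
      intro t _
      have hsplit := Finset.card_filter_add_card_filter_not
        (s := univ.filter fun v : Fin n => ¬ v.val = 0)
        (p := fun v => t < minE (φ ⟨0, hn0⟩) (φ v))
      have hneg : ((univ.filter fun v : Fin n => ¬ v.val = 0).filter
          fun v => ¬ t < minE (φ ⟨0, hn0⟩) (φ v))
          = ((univ.filter fun v : Fin n => ¬ v.val = 0).filter
          fun v => minE (φ ⟨0, hn0⟩) (φ v) ≤ t) := by
        apply Finset.filter_congr
        intro v _
        simp [Nat.not_lt]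
      rw [hneg, hscard] at hsplit
      have hle := card_close_le hd0 hn0 φ hφ t
      have hdt : 0 < d ^ t := pow_pos hd0 t
      omega
    exact Nat.mul_le_mul_left 2 (Finset.sum_le_sum hterm)
  -- the optimal arrangement
  set φ0 : Fin n → Fin (d ^ h) := fun v => ⟨v.val, lt_of_lt_of_le v.2 hnh⟩ with hφ0_def
  have hφ0inj : Function.Injective φ0 := by
    intro a b hab
    have hv : (φ0 a).val = (φ0 b).val := congrArg Fin.val hab
    simp only [hφ0_def] at hv
    exact Fin.ext hv
  have hcost0 : starCost d h n φ0 = N := by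
    rw [starCost_eq hd0 hn0 φ0, sum_minE_eq hn0 φ0, hN_def]
    congr 1
    refine Finset.sum_congr rfl fun t ht => ?_
    have hdt : 0 < d ^ t := pow_pos hd0 t
    have hiff : ∀ v : Fin n, (t < minE (φ0 ⟨0, hn0⟩) (φ0 v) ↔ d ^ t ≤ v.val) := by
      intro v
      rw [← Nat.not_le, minE_le_iff]
      have : (φ0 ⟨0, hn0⟩ : ℕ) = 0 := rfl
      rw [this, Nat.zero_div]
      have : (φ0 v : ℕ) = v.val := rfl
      rw [this, eq_comm, Nat.div_eq_zero_iff]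
      omega
    have hset : ((univ.filter fun v : Fin n => ¬ v.val = 0).filter
        fun v => t < minE (φ0 ⟨0, hn0⟩) (φ0 v))
        = (univ : Finset (Fin n)).filter fun v => d ^ t ≤ v.val := by
      ext v
      simp only [Finset.mem_filter, Finset.mem_univ, true_and]
      rw [hiff v]
      constructor
      · rintro ⟨_, hv⟩; exact hv
      · intro hv; exact ⟨by omega, hv⟩
    rw [hset, card_fin_ge]
  constructor
  · exact ⟨φ0, hφ0inj, by rw [hvalue, hcost0]⟩
  · rintro c ⟨φ, hφ, rfl⟩
    rw [hvalue]
    exact_mod_cast hlower φ hφ
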